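/- Let ρ∞ > 0, θ∞ > 0, u∞ < 0, r > 0 and 0 < δ < r²/2. Then there exists a constant C > 0 such that for every Φ ∈ [0, δ] and every ξ = (ξ₁, ξ') ∈ ℝ³ with ξ₁ ≤ −r, setting ζ₁ := −√(ξ₁² − 2Φ), one has |M∞(ζ₁, ξ') − M∞(ξ)| ≤ C (1 + |ξ₁|) M∞(ξ) Φ. -/

import Mathlib

open MeasureTheory Real Set Filter

/-- The Maxwellian `M∞` with parameters `ρ∞, θ∞, u∞`, where `ξ = (ξ₁, ξ₂, ξ₃)`. -/
noncomputable def Maxwellian (ρ θ u : ℝ) (ξ : ℝ × ℝ × ℝ) : ℝ :=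
  ρ * (2 * π * θ) ^ (-(3:ℝ)/2) *
    Real.exp (-(((ξ.1 - u)^2 + ξ.2.1^2 + ξ.2.2^2) / (2 * θ)))

lemma abs_exp_sub_one_le'' (x : ℝ) : |Real.exp x - 1| ≤ |x| * Real.exp |x| := by
  rcases le_or_gt 0 x with h | h
  · rw [abs_of_nonneg h, abs_of_nonneg (by nlinarith [Real.one_le_exp h] : (0:ℝ) ≤ Real.exp x - 1)]
    have h1 := Real.add_one_le_exp (-x)
    have h2 : Real.exp (-x) * Real.exp x = 1 := by rw [← Real.exp_add]; simp
    nlinarith [Real.exp_pos x]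
  · rw [abs_of_neg h, abs_of_nonpos (by nlinarith [Real.exp_le_one_iff.mpr h.le] : Real.exp x - 1 ≤ 0)]
    have h1 := Real.add_one_le_exp x
    have h2 : (1:ℝ) ≤ Real.exp (-x) := Real.one_le_exp (by linarith)
    nlinarith

set_option maxHeartbeats 1600000 in
/-- `|M∞(ζ₁,ξ') − M∞(ξ)| ≤ C (1+|ξ₁|) M∞(ξ) Φ` for `ζ₁ = -√(ξ₁² - 2Φ)`. -/
theorem shifted_maxwellian_difference_bound
    (ρ θ u r δ : ℝ) (hρ : 0 < ρ) (hθ : 0 < θ) (hu : u < 0) (hr : 0 < r)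
    (hδ : 0 < δ) (hδr : δ < r^2 / 2) :
    ∃ C > 0, ∀ Φ ∈ Set.Icc (0:ℝ) δ, ∀ ξ₁ ξ₂ ξ₃ : ℝ, ξ₁ ≤ -r →
      |Maxwellian ρ θ u (-Real.sqrt (ξ₁^2 - 2*Φ), ξ₂, ξ₃) - Maxwellian ρ θ u (ξ₁, ξ₂, ξ₃)|
        ≤ C * (1 + |ξ₁|) * Maxwellian ρ θ u (ξ₁, ξ₂, ξ₃) * Φ := by
  have hu' : 0 < |u| := abs_pos.mpr hu.ne
  set K : ℝ := (1 + 2*|u|/r)/θ with hKdef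
  have hK : 0 < K := by positivity
  clear_value K
  refine ⟨K * Real.exp (K * δ), by positivity, ?_⟩
  rintro Φ ⟨hΦ0, hΦδ⟩ ξ₁ ξ₂ ξ₃ hξ
  have hr1 : r ≤ -ξ₁ := by linarith
  have hsq : 0 ≤ ξ₁^2 - 2*Φ := by nlinarith
  set s := Real.sqrt (ξ₁^2 - 2*Φ) with hs
  have hs0 : 0 ≤ s := Real.sqrt_nonneg _
  have hssq : s^2 = ξ₁^2 - 2*Φ := Real.sq_sqrt hsq
  clear_value s
  have hsle : s ≤ -ξ₁ := by nlinarith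
  set d : ℝ := -s - ξ₁ with hd
  clear_value d
  have hd0 : 0 ≤ d := by simp only [hd]; linarith
  have hdle : d ≤ 2*Φ/r := by
    rw [le_div_iff₀ hr]
    have h1 : d * (-ξ₁ + s) = 2*Φ := by simp only [hd]; nlinarith
    have h2 : r ≤ -ξ₁ + s := by linarith
    nlinarith
  set A : ℝ := ((ξ₁ - u)^2 - (-s - u)^2) / (2*θ) with hA
  clear_value A
  have hnum : (ξ₁ - u)^2 - (-s - u)^2 = 2*Φ + 2*u*d := by simp only [hd]; nlinarith
  have habsA : |A| ≤ K * Φ := by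
    have hud : -(|u| * d) ≤ u * d ∧ u * d ≤ |u| * d := by
      constructor <;> nlinarith [neg_abs_le u, le_abs_self u]
    have h1 : |(ξ₁ - u)^2 - (-s - u)^2| ≤ 2*Φ + 2 * |u| * (2*Φ/r) := by
      rw [hnum, abs_le]
      have h2 : |u| * d ≤ |u| * (2*Φ/r) := mul_le_mul_of_nonneg_left hdle (abs_nonneg u)
      constructor <;> nlinarith [hud.1, hud.2]
    have heq : |A| = |(ξ₁ - u)^2 - (-s - u)^2| / (2*θ) := by
      rw [hA, abs_div, abs_of_pos (by positivity : (0:ℝ) < 2*θ)]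
    rw [heq, div_le_iff₀ (by positivity : (0:ℝ) < 2*θ)]
    have hKΦ : K * Φ * (2*θ) = 2*Φ + 2 * |u| * (2*Φ/r) := by
      rw [hKdef]
      field_simp
    rw [hKΦ]; exact h1
  have hAδ : |A| ≤ K * δ := le_trans habsA (by nlinarith)
  have hMpos : 0 < Maxwellian ρ θ u (ξ₁, ξ₂, ξ₃) := by
    unfold Maxwellian
    positivity
  have hM : Maxwellian ρ θ u (-s, ξ₂, ξ₃)
      = Maxwellian ρ θ u (ξ₁, ξ₂, ξ₃) * Real.exp A := by
    simp only [Maxwellian]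
    conv_rhs => rw [mul_assoc, ← Real.exp_add]
    congr 2
    rw [hA]
    field_simp
    ring
  rw [hM, show Maxwellian ρ θ u (ξ₁, ξ₂, ξ₃) * Real.exp A - Maxwellian ρ θ u (ξ₁, ξ₂, ξ₃)
      = Maxwellian ρ θ u (ξ₁, ξ₂, ξ₃) * (Real.exp A - 1) by ring,
    abs_mul, abs_of_pos hMpos]
  have hb : |Real.exp A - 1| ≤ K * Φ * Real.exp (K * δ) := by
    calc |Real.exp A - 1| ≤ |A| * Real.exp |A| := abs_exp_sub_one_le'' A
      _ ≤ (K*Φ) * Real.exp (K*δ) := by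
          apply mul_le_mul habsA (Real.exp_le_exp.mpr hAδ) (Real.exp_pos _).le (by positivity)
  calc Maxwellian ρ θ u (ξ₁, ξ₂, ξ₃) * |Real.exp A - 1|
      ≤ Maxwellian ρ θ u (ξ₁, ξ₂, ξ₃) * (K * Φ * Real.exp (K * δ)) :=
        mul_le_mul_of_nonneg_left hb hMpos.le
    _ ≤ K * Real.exp (K * δ) * (1 + |ξ₁|) * Maxwellian ρ θ u (ξ₁, ξ₂, ξ₃) * Φ := by
        nlinarith [mul_nonneg (mul_nonneg (mul_nonneg hK.le (Real.exp_pos (K*δ)).le)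
          (abs_nonneg ξ₁)) (mul_nonneg hMpos.le hΦ0)]
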